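/- In the first q-commutative algebra Q_1 = K(q)⟨x,y | yx = qxy⟩, for any non-constant f ∈ K(q)[x], the multiplicative set S generated by {f(q^z x) : z ∈ ℤ} satisfies the right Ore condition: for every g ∈ Q_1 and h ∈ S there exist t ∈ Q_1 and h' ∈ S with g · h' = h · t. -/
import Mathlib


/-- In the first q-commutative algebra `Q₁ = K(q)⟨x,y | yx = qxy⟩` (realized as the
subalgebra of `End_K(K[x])` generated by multiplication by `X` and the q-dilation operator
`p(X) ↦ p(qX)`, for a unit `q`), for any non-constant `f ∈ K[x]`, the multiplicative monoid `S`
generated by `{f(q^z x) : z ∈ ℤ}` satisfies the right Ore condition: for every `g ∈ Q₁` and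
`h ∈ S` there exist `t ∈ Q₁` and `h' ∈ S` with `g · h' = h · t`. -/
theorem q_commutative_dilations_right_ore
    {K : Type*} [Field K] (q : Kˣ)
    (f : Polynomial K) (hf : f.natDegree ≠ 0)
    (xop yop : Module.End K (Polynomial K))
    (hxop : xop = LinearMap.mulLeft K (Polynomial.X : Polynomial K))
    (hyop : yop = (Polynomial.aeval (Polynomial.C (q : K) * Polynomial.X : Polynomial K) :
        Polynomial K →ₐ[K] Polynomial K).toLinearMap)
    (S : Submonoid (Module.End K (Polynomial K)))
    (hS : S = Submonoid.closure (Set.range fun z : ℤ =>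
        LinearMap.mulLeft K (f.comp (Polynomial.C ((q ^ z : Kˣ) : K) * Polynomial.X)))) :
    ∀ g ∈ Algebra.adjoin K {xop, yop}, ∀ h ∈ S,
      ∃ h' ∈ S, ∃ t ∈ Algebra.adjoin K {xop, yop}, g * h' = h * t := by
  classical
  -- multiplication-by-p operators
  set ML : Polynomial K → Module.End K (Polynomial K) := fun p => LinearMap.mulLeft K p with hML
  have hmul : ∀ p r : Polynomial K, ML p * ML r = ML (p * r) := by
    intro p r
    rw [hML]
    simp only
    rw [LinearMap.mulLeft_mul, Module.End.mul_eq_comp]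
  -- the key q-commutation relation
  have hY : ∀ p : Polynomial K,
      yop * ML p = ML (p.comp (Polynomial.C (q : K) * Polynomial.X)) * yop := by
    intro p
    apply LinearMap.ext
    intro r
    simp only [hyop, Module.End.mul_apply, hML, LinearMap.mulLeft_apply, AlgHom.toLinearMap_apply,
      map_mul, Polynomial.comp_eq_aeval]
  -- every element of S is a multiplication operator
  have hSmem : ∀ h ∈ S, ∃ F : Polynomial K, h = ML F := by
    intro h hh
    rw [hS] at hh
    induction hh using Submonoid.closure_induction with
    | mem x hx =>
      obtain ⟨z, rfl⟩ := hx
      exact ⟨_, rfl⟩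
    | one => exact ⟨1, by apply LinearMap.ext; intro r; simp [hML]⟩
    | mul x y _ _ hx hy =>
      obtain ⟨F, rfl⟩ := hx
      obtain ⟨G, rfl⟩ := hy
      exact ⟨F * G, (hmul F G).symm.symm⟩
  -- S is commutative
  have hScomm : ∀ h₁ ∈ S, ∀ h₂ ∈ S, h₁ * h₂ = h₂ * h₁ := by
    intro h₁ h₁S h₂ h₂S
    obtain ⟨F, rfl⟩ := hSmem h₁ h₁S
    obtain ⟨G, rfl⟩ := hSmem h₂ h₂S
    rw [hmul, hmul, mul_comm]
  -- xop commutes with everything in S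
  have hxcomm : ∀ h ∈ S, xop * h = h * xop := by
    intro h hh
    obtain ⟨F, rfl⟩ := hSmem h hh
    rw [hxop]
    show ML Polynomial.X * ML F = ML F * ML Polynomial.X
    rw [hmul, hmul, mul_comm]
  -- S is contained in the adjoined algebra
  have hMLadj : ∀ F : Polynomial K, ML F ∈ Algebra.adjoin K {xop, yop} := by
    intro F
    have key : ML F = Polynomial.aeval xop F := by
      rw [hxop]
      have h1 : Polynomial.aeval ((Algebra.lmul K (Polynomial K)) Polynomial.X) F
          = (Algebra.lmul K (Polynomial K)) (Polynomial.aeval Polynomial.X F) :=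
        Polynomial.aeval_algHom_apply _ _ _
      rw [Polynomial.aeval_X_left_apply] at h1
      exact h1.symm
    rw [key]
    exact Algebra.adjoin_mono (by simp) (Polynomial.aeval_mem_adjoin_singleton K xop)
  have hSadj : ∀ h ∈ S, h ∈ Algebra.adjoin K {xop, yop} := by
    intro h hh
    obtain ⟨F, rfl⟩ := hSmem h hh
    exact hMLadj F
  -- yop can be pushed past elements of S
  have hYS : ∀ h ∈ S, ∃ h' ∈ S, yop * h' = h * yop := by
    intro h hh
    rw [hS] at hh
    induction hh using Submonoid.closure_induction with
    | mem x hx =>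
      obtain ⟨z, rfl⟩ := hx
      refine ⟨ML (f.comp (Polynomial.C ((q ^ (z - 1) : Kˣ) : K) * Polynomial.X)), ?_, ?_⟩
      · rw [hS]
        exact Submonoid.subset_closure ⟨z - 1, rfl⟩
      · rw [hY]
        congr 2
        rw [Polynomial.comp_assoc]
        congr 1
        simp only [Polynomial.mul_comp, Polynomial.C_comp, Polynomial.X_comp]
        rw [← mul_assoc, ← Polynomial.C_mul]
        norm_cast
        rw [← zpow_add_one, sub_add_cancel]
    | one => exact ⟨1, one_mem S, by simp⟩
    | mul x y hx hy hx' hy' =>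
      obtain ⟨x', hx'S, hxe⟩ := hx'
      obtain ⟨y', hy'S, hye⟩ := hy'
      refine ⟨x' * y', mul_mem hx'S hy'S, ?_⟩
      rw [← mul_assoc, hxe, mul_assoc, hye, ← mul_assoc]
  -- main induction over the adjoined algebra
  intro g hg
  induction hg using Algebra.adjoin_induction with
  | mem u hu =>
    intro h hh
    simp only [Set.mem_insert_iff, Set.mem_singleton_iff] at hu
    rcases hu with hu | hu
    · exact ⟨h, hh, u, by rw [hu]; exact Algebra.subset_adjoin (Set.mem_insert _ _),
        by rw [hu]; exact hxcomm h hh⟩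
    · obtain ⟨h', h'S, he⟩ := hYS h hh
      exact ⟨h', h'S, u, by rw [hu]; exact Algebra.subset_adjoin (Set.mem_insert_iff.2 (Or.inr rfl)),
        by rw [hu]; exact he⟩
  | algebraMap r =>
    intro h hh
    exact ⟨h, hh, algebraMap K _ r, algebraMap_mem _ r, Algebra.commutes r h⟩
  | add g₁ g₂ hg₁ hg₂ ih₁ ih₂ =>
    intro h hh
    obtain ⟨h₁, h₁S, t₁, t₁adj, e₁⟩ := ih₁ h hh
    obtain ⟨h₂, h₂S, t₂, t₂adj, e₂⟩ := ih₂ h hh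
    refine ⟨h₁ * h₂, mul_mem h₁S h₂S, t₁ * h₂ + t₂ * h₁,
      add_mem (mul_mem t₁adj (hSadj h₂ h₂S)) (mul_mem t₂adj (hSadj h₁ h₁S)), ?_⟩
    have step : (g₁ + g₂) * (h₁ * h₂) = (g₁ * h₁) * h₂ + (g₂ * h₂) * h₁ := by
      rw [add_mul]
      nth_rewrite 2 [hScomm h₁ h₁S h₂ h₂S]
      rw [← mul_assoc, ← mul_assoc]
    rw [step, e₁, e₂, mul_assoc, mul_assoc, ← mul_add]
  | mul g₁ g₂ hg₁ hg₂ ih₁ ih₂ =>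
    intro h hh
    obtain ⟨h₁, h₁S, t₁, t₁adj, e₁⟩ := ih₁ h hh
    obtain ⟨h₂, h₂S, t₂, t₂adj, e₂⟩ := ih₂ h₁ h₁S
    refine ⟨h₂, h₂S, t₁ * t₂, mul_mem t₁adj t₂adj, ?_⟩
    rw [mul_assoc, e₂, ← mul_assoc, e₁, mul_assoc]
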